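/- arXiv:2301.00927 — 2 statements merged into one kernel-verified Lean document; each statement's English description precedes it below -/
import Mathlib

section
/- Let m ∈ ℕ, let U₁, …, U_m ∈ ℝ^m be orthonormal (Uᵢ · Uⱼ = δ_{ij}), let λ : Fin m → ℝ with λᵢ ≥ 0 for all i, and set G = Σ_{i=1}^m λᵢ · (Uᵢ Uᵢᵀ). Let δ ≥ 0, let S ⊆ {1,…,m}, and let V₁, …, V_m ∈ ℝ^m be vectors with Euclidean norm ‖Vⱼ − Uⱼ‖₂ ≤ δ for every j ∈ S. Then: trace( G · Σ_{j∈S} Vⱼ Vⱼᵀ ) ≤ (1 + 2δ) · Σ_{j∈S} λⱼ + |S| · δ² · Σ_{i=1}^m λᵢ. -/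
open Matrix BigOperators

private lemma trace_vvT_mul_vvT {m : ℕ} (u v : Fin m → ℝ) :
    Matrix.trace (Matrix.vecMulVec u u * Matrix.vecMulVec v v) = (u ⬝ᵥ v) ^ 2 := by
  simp only [Matrix.trace, Matrix.diag_apply, Matrix.mul_apply, Matrix.vecMulVec_apply,
    dotProduct, sq, Finset.sum_mul_sum]
  refine Finset.sum_congr rfl fun k _ => Finset.sum_congr rfl fun p _ => by ring

private lemma per_j_bound {m : ℕ} (U : Fin m → (Fin m → ℝ))
    (hU : ∀ i j : Fin m, U i ⬝ᵥ U j = if i = j then (1 : ℝ) else 0)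
    (l : Fin m → ℝ) (hl : ∀ i, 0 ≤ l i)
    (δ : ℝ) (hδ : 0 ≤ δ) (j : Fin m) (v : Fin m → ℝ)
    (hv : Real.sqrt (∑ k : Fin m, (v k - U j k) ^ 2) ≤ δ) :
    ∑ i : Fin m, l i * (U i ⬝ᵥ v) ^ 2 ≤ (1 + 2 * δ) * l j + δ ^ 2 * ∑ i : Fin m, l i := by
  set e : Fin m → ℝ := fun k => v k - U j k with he
  have hee : e ⬝ᵥ e ≤ δ ^ 2 := by
    have h1 : (0:ℝ) ≤ ∑ k : Fin m, (v k - U j k) ^ 2 :=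
      Finset.sum_nonneg fun k _ => sq_nonneg _
    have := Real.sq_sqrt h1
    have h2 : (Real.sqrt (∑ k : Fin m, (v k - U j k) ^ 2)) ^ 2 ≤ δ ^ 2 :=
      pow_le_pow_left₀ (Real.sqrt_nonneg _) hv 2
    rw [this] at h2
    simpa [dotProduct, he, sq] using h2
  have hce : ∀ i : Fin m, (U i ⬝ᵥ e) ^ 2 ≤ δ ^ 2 := by
    intro i
    have hcs : (∑ k : Fin m, U i k * e k) ^ 2 ≤
        (∑ k : Fin m, U i k ^ 2) * ∑ k : Fin m, e k ^ 2 := by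
      exact Finset.sum_mul_sq_le_sq_mul_sq Finset.univ (U i) e
    have hUi : ∑ k : Fin m, U i k ^ 2 = 1 := by
      have := hU i i; simpa [dotProduct, sq] using this
    have hee' : ∑ k : Fin m, e k ^ 2 ≤ δ ^ 2 := by simpa [dotProduct, sq] using hee
    calc (U i ⬝ᵥ e) ^ 2 = (∑ k : Fin m, U i k * e k) ^ 2 := by rfl
      _ ≤ (∑ k : Fin m, U i k ^ 2) * ∑ k : Fin m, e k ^ 2 := hcs
      _ = ∑ k : Fin m, e k ^ 2 := by rw [hUi, one_mul]
      _ ≤ δ ^ 2 := hee'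
  have hsplit : ∀ i : Fin m, U i ⬝ᵥ v = (if i = j then (1:ℝ) else 0) + U i ⬝ᵥ e := by
    intro i
    have : v = fun k => U j k + e k := by funext k; simp [he]
    rw [this]
    have : (U i ⬝ᵥ fun k => U j k + e k) = U i ⬝ᵥ U j + U i ⬝ᵥ e := by
      simp [dotProduct, mul_add, Finset.sum_add_distrib]
    rw [this, hU i j]
  have hterm : ∀ i : Fin m, l i * (U i ⬝ᵥ v) ^ 2 ≤
      (if i = j then (1 + 2 * δ) * l i else 0) + l i * δ ^ 2 := by
    intro i
    rw [hsplit i]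
    by_cases h : i = j
    · subst h
      simp only [if_pos rfl, if_true]
      have hc := hce i
      have hcd : U i ⬝ᵥ e ≤ δ := by nlinarith [hce i]
      nlinarith [hl i, hce i]
    · simp only [if_neg h]
      have := hce i
      nlinarith [hl i, hce i]
  calc ∑ i : Fin m, l i * (U i ⬝ᵥ v) ^ 2
      ≤ ∑ i : Fin m, ((if i = j then (1 + 2 * δ) * l i else 0) + l i * δ ^ 2) :=
        Finset.sum_le_sum fun i _ => hterm i
    _ = (1 + 2 * δ) * l j + δ ^ 2 * ∑ i : Fin m, l i := by
        rw [Finset.sum_add_distrib, Finset.sum_ite_eq' Finset.univ j]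
        simp only [Finset.mem_univ, if_true, ← Finset.sum_mul]; ring

/-- Deterministic core of Lemma 2 (PCA truncation error bound): if the `U j` are
orthonormal, the `λ j` nonnegative, and `‖V j − U j‖₂ ≤ δ` for `j ∈ S`, then
`tr(G · ∑_{j∈S} V j V jᵀ) ≤ (1 + 2δ) ∑_{j∈S} λ j + |S| δ² ∑ i, λ i`
where `G = ∑ i, λ i • U i U iᵀ`. -/
theorem trace_perturbed_proj_bound {m : ℕ} (U : Fin m → (Fin m → ℝ))
    (hU : ∀ i j : Fin m, U i ⬝ᵥ U j = if i = j then (1 : ℝ) else 0)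
    (l : Fin m → ℝ) (hl : ∀ i, 0 ≤ l i)
    (δ : ℝ) (hδ : 0 ≤ δ) (S : Finset (Fin m)) (V : Fin m → (Fin m → ℝ))
    (hV : ∀ j ∈ S, Real.sqrt (∑ k : Fin m, (V j k - U j k) ^ 2) ≤ δ) :
    Matrix.trace
        ((∑ i : Fin m, l i • Matrix.vecMulVec (U i) (U i)) *
          ∑ j ∈ S, Matrix.vecMulVec (V j) (V j)) ≤
      (1 + 2 * δ) * ∑ j ∈ S, l j + (S.card : ℝ) * δ ^ 2 * ∑ i : Fin m, l i := by
  have htr : Matrix.trace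
        ((∑ i : Fin m, l i • Matrix.vecMulVec (U i) (U i)) *
          ∑ j ∈ S, Matrix.vecMulVec (V j) (V j)) =
      ∑ j ∈ S, ∑ i : Fin m, l i * (U i ⬝ᵥ V j) ^ 2 := by
    rw [Matrix.mul_sum, Matrix.trace_sum]
    refine Finset.sum_congr rfl fun j _ => ?_
    rw [Matrix.sum_mul, Matrix.trace_sum]
    refine Finset.sum_congr rfl fun i _ => ?_
    rw [Matrix.smul_mul, Matrix.trace_smul, trace_vvT_mul_vvT]
    simp
  rw [htr]
  calc ∑ j ∈ S, ∑ i : Fin m, l i * (U i ⬝ᵥ V j) ^ 2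
      ≤ ∑ j ∈ S, ((1 + 2 * δ) * l j + δ ^ 2 * ∑ i : Fin m, l i) :=
        Finset.sum_le_sum fun j hj => per_j_bound U hU l hl δ hδ j (V j) (hV j hj)
    _ = (1 + 2 * δ) * ∑ j ∈ S, l j + (S.card : ℝ) * δ ^ 2 * ∑ i : Fin m, l i := by
        rw [Finset.sum_add_distrib, ← Finset.mul_sum, Finset.sum_const, nsmul_eq_mul]
        ring
end

section
/- Let S and S' be measurable spaces, let κ be a Markov kernel from S to S' (so κ(x) is a probability measure on S' for each x ∈ S), let μ be a measure on S, let σ be a measure on S', and let ω ∈ [0,∞) be such that the measure μ.bind κ (defined by (μ.bind κ)(A) = ∫ κ(x)(A) dμ(x)) satisfies μ.bind κ ≤ ω • σ. Then for every measurable f : S' → [0,∞]: ∫_S ( ∫_{S'} f d(κ x) )² dμ(x) ≤ ω · ∫_{S'} f² dσ. -/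
open MeasureTheory ProbabilityTheory ENNReal

lemma jensen_sq {S' : Type*} [MeasurableSpace S'] (ν : Measure S') [IsProbabilityMeasure ν]
    (f : S' → ℝ≥0∞) (hf : Measurable f) :
    (∫⁻ y, f y ∂ν) ^ 2 ≤ ∫⁻ y, (f y) ^ 2 ∂ν := by
  have hpq : Real.HolderConjugate 2 2 := by constructor <;> norm_num
  have h := ENNReal.lintegral_mul_le_Lp_mul_Lq ν hpq hf.aemeasurable
    (aemeasurable_const (b := (1 : ℝ≥0∞)))
  simp only [Pi.mul_apply, mul_one, ENNReal.one_rpow, lintegral_const, measure_univ,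
    ENNReal.one_rpow, one_mul] at h
  have h2 : (∫⁻ y, f y ∂ν) ≤ (∫⁻ y, f y ^ (2:ℝ) ∂ν) ^ (1/2 : ℝ) := by simpa using h
  calc (∫⁻ y, f y ∂ν) ^ 2 ≤ ((∫⁻ y, f y ^ (2:ℝ) ∂ν) ^ (1/2 : ℝ)) ^ 2 := pow_le_pow_left' h2 2
    _ = ∫⁻ y, (f y) ^ 2 ∂ν := by
        rw [← ENNReal.rpow_natCast _ 2, ← ENNReal.rpow_mul]
        norm_num

/-- Jensen plus change of measure via the concentration coefficient: if `μ.bind κ ≤ ω • σ`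
for a Markov kernel `κ`, then `∫ (∫ f dκ(x))² dμ(x) ≤ ω ∫ f² dσ` for every
measurable `f : S' → [0,∞]`. -/
theorem concentration_jensen {S S' : Type*} [MeasurableSpace S] [MeasurableSpace S']
    (κ : Kernel S S') [IsMarkovKernel κ] (μ : Measure S) (σ : Measure S')
    (ω : ℝ≥0∞) (hω : ω ≠ ⊤) (hbind : μ.bind (fun x => κ x) ≤ ω • σ) :
    ∀ f : S' → ℝ≥0∞, Measurable f →
      ∫⁻ x, (∫⁻ y, f y ∂(κ x)) ^ 2 ∂μ ≤ ω * ∫⁻ y, (f y) ^ 2 ∂σ := by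
  intro f hf
  calc ∫⁻ x, (∫⁻ y, f y ∂(κ x)) ^ 2 ∂μ
      ≤ ∫⁻ x, (∫⁻ y, (f y) ^ 2 ∂(κ x)) ∂μ :=
        lintegral_mono fun x => jensen_sq (κ x) f hf
    _ = ∫⁻ y, (f y) ^ 2 ∂(μ.bind (fun x => κ x)) :=
        (MeasureTheory.Measure.lintegral_bind κ.measurable.aemeasurable (hf.pow_const 2).aemeasurable).symm
    _ ≤ ∫⁻ y, (f y) ^ 2 ∂(ω • σ) := lintegral_mono' hbind le_rfl
    _ = ω * ∫⁻ y, (f y) ^ 2 ∂σ := by rw [lintegral_smul_measure, smul_eq_mul]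
end
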